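/- Let p be a nonzero vector in a finite-dimensional real inner product space, let W be a linear subspace, and let Πp denote the orthogonal projection of p onto W. For nonzero vectors x, y define sin²∠(x,y) := 1 − ⟨x,y⟩²/(‖x‖²‖y‖²). Then for every nonzero w ∈ W, sin²∠(p, w) ≥ ‖p − Πp‖²/‖p‖²; moreover, if Πp ≠ 0 then equality holds for w = Πp, so the infimum of sin²∠(p,w) over nonzero w ∈ W equals ‖p − Πp‖²/‖p‖² (the minimal relative squared Euclidean approximation error of p by elements of W). -/

import Mathlib

/-- Let `p ≠ 0` in a finite-dimensional real inner product space, `W` a subspace and `Πp`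
the orthogonal projection of `p` onto `W`.  With `sin²∠(x,y) = 1 - ⟨x,y⟩²/(‖x‖²‖y‖²)`:
every nonzero `w ∈ W` satisfies `sin²∠(p,w) ≥ ‖p - Πp‖²/‖p‖²`; if `Πp ≠ 0` then equality
holds at `w = Πp`, and hence the infimum of `sin²∠(p,w)` over nonzero `w ∈ W` equals
`‖p - Πp‖²/‖p‖²` (and is attained). -/
theorem sin_sq_angle_ge_relative_error {V : Type*} [NormedAddCommGroup V]
    [InnerProductSpace ℝ V] [FiniteDimensional ℝ V]
    (W : Submodule ℝ V) (p : V) (hp : p ≠ 0) :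
    (∀ w ∈ W, w ≠ 0 →
      ‖p - (Submodule.orthogonalProjectionOnto W p : V)‖ ^ 2 / ‖p‖ ^ 2 ≤
        1 - (inner ℝ p w : ℝ) ^ 2 / (‖p‖ ^ 2 * ‖w‖ ^ 2)) ∧
    ((Submodule.orthogonalProjectionOnto W p : V) ≠ 0 →
      1 - (inner ℝ p ((Submodule.orthogonalProjectionOnto W p : V)) : ℝ) ^ 2 /
          (‖p‖ ^ 2 * ‖(Submodule.orthogonalProjectionOnto W p : V)‖ ^ 2) =
        ‖p - (Submodule.orthogonalProjectionOnto W p : V)‖ ^ 2 / ‖p‖ ^ 2) ∧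
    ((Submodule.orthogonalProjectionOnto W p : V) ≠ 0 →
      IsLeast {s : ℝ | ∃ w ∈ W, w ≠ 0 ∧ s = 1 - (inner ℝ p w : ℝ) ^ 2 / (‖p‖ ^ 2 * ‖w‖ ^ 2)}
        (‖p - (Submodule.orthogonalProjectionOnto W p : V)‖ ^ 2 / ‖p‖ ^ 2)) := by
  set q : V := (Submodule.orthogonalProjectionOnto W p : V) with hq
  have hqW : q ∈ W := (Submodule.orthogonalProjectionOnto W p).2
  have hpn : (0:ℝ) < ‖p‖ := norm_pos_iff.mpr hp
  have horth : ∀ w ∈ W, (inner ℝ (p - q) w : ℝ) = 0 := by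
    intro w hw
    have hmem : p - q ∈ Wᗮ := W.sub_starProjection_mem_orthogonal p
    rw [real_inner_comm]; exact hmem w hw
  have hinner : ∀ w ∈ W, (inner ℝ p w : ℝ) = inner ℝ q w := by
    intro w hw
    have := horth w hw
    rw [inner_sub_left] at this
    linarith
  have hpyth : ‖p‖ ^ 2 = ‖q‖ ^ 2 + ‖p - q‖ ^ 2 := by
    have h0 : (inner ℝ q (p - q) : ℝ) = 0 := by
      rw [real_inner_comm]; exact horth q hqW
    have : ‖q + (p - q)‖ ^ 2 = ‖q‖ ^ 2 + 2 * (inner ℝ q (p - q) : ℝ) + ‖p - q‖ ^ 2 := by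
      rw [← norm_add_sq_real]
    rw [add_sub_cancel] at this
    rw [this, h0]; ring
  have main : ∀ w ∈ W, w ≠ 0 →
      ‖p - q‖ ^ 2 / ‖p‖ ^ 2 ≤ 1 - (inner ℝ p w : ℝ) ^ 2 / (‖p‖ ^ 2 * ‖w‖ ^ 2) := by
    intro w hw hw0
    have hwn : (0:ℝ) < ‖w‖ := norm_pos_iff.mpr hw0
    have hcs : |(inner ℝ q w : ℝ)| ≤ ‖q‖ * ‖w‖ := abs_real_inner_le_norm q w
    have hcs2 : (inner ℝ q w : ℝ) ^ 2 ≤ ‖q‖ ^ 2 * ‖w‖ ^ 2 := by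
      nlinarith [abs_nonneg (inner ℝ q w : ℝ), sq_abs (inner ℝ q w : ℝ)]
    have key : (inner ℝ p w : ℝ) ^ 2 / (‖p‖ ^ 2 * ‖w‖ ^ 2) ≤ ‖q‖ ^ 2 / ‖p‖ ^ 2 := by
      rw [hinner w hw, div_le_div_iff₀ (by positivity) (by positivity)]
      nlinarith
    have heq : ‖p - q‖ ^ 2 / ‖p‖ ^ 2 = 1 - ‖q‖ ^ 2 / ‖p‖ ^ 2 := by
      field_simp
      linarith
    linarith
  have heqpart : q ≠ 0 →
      1 - (inner ℝ p q : ℝ) ^ 2 / (‖p‖ ^ 2 * ‖q‖ ^ 2) = ‖p - q‖ ^ 2 / ‖p‖ ^ 2 := by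
    intro hq0
    have hqn : (0:ℝ) < ‖q‖ := norm_pos_iff.mpr hq0
    have h1 : (inner ℝ p q : ℝ) = ‖q‖ ^ 2 := by
      rw [hinner q hqW, real_inner_self_eq_norm_sq]
    rw [h1]
    field_simp
    linear_combination hpyth
  refine ⟨main, heqpart, ?_⟩
  intro hq0
  constructor
  · exact ⟨q, hqW, hq0, (heqpart hq0).symm⟩
  · rintro s ⟨w, hw, hw0, rfl⟩
    exact main w hw hw0
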